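/- The complete bipartite graph K_{3,n-3} contains no cycle with two chords incident to a common vertex. -/

import Mathlib

open SimpleGraph Walk

/-- A chord of the cycle `c` in `G`: an edge of `G` whose endpoints lie on `c`
but which is not itself an edge of `c`. -/
def IsChord {V : Type*} (G : SimpleGraph V) {v : V} (c : G.Walk v v) (e : Sym2 V) : Prop :=
  e ∈ G.edgeSet ∧ e ∉ c.edges ∧ ∀ x ∈ e, x ∈ c.support

/-- `G` contains a doubly chorded cycle: a cycle with at least two chords. -/
def HasDCC {V : Type*} (G : SimpleGraph V) : Prop :=
  ∃ (v : V) (c : G.Walk v v), c.IsCycle ∧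
    ∃ e₁ e₂ : Sym2 V, e₁ ≠ e₂ ∧ IsChord G c e₁ ∧ IsChord G c e₂

/-- `G` contains a cycle with two chords incident to a common vertex. -/
def HasDCC1 {V : Type*} (G : SimpleGraph V) : Prop :=
  ∃ (v : V) (c : G.Walk v v), c.IsCycle ∧
    ∃ e₁ e₂ : Sym2 V, e₁ ≠ e₂ ∧ IsChord G c e₁ ∧ IsChord G c e₂ ∧
      ∃ w : V, w ∈ e₁ ∧ w ∈ e₂

/-- The complete bipartite graph `K_{3,n-3}` on `Fin n`, with parts `{0,1,2}` and the rest. -/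
def K31 (n : ℕ) : SimpleGraph (Fin n) where
  Adj v w := (v.val < 3) ≠ (w.val < 3)
  symm := ⟨by intro v w h; exact h.symm⟩
  loopless := ⟨fun v h => h rfl⟩

variable {n : ℕ}

def sgn {n : ℕ} (z : Fin n) : ℤ := if z.val < 3 then 1 else -1

lemma K31_sgn {u w : Fin n} (h : (K31 n).Adj u w) : sgn w = -sgn u := by
  simp only [K31] at h
  unfold sgn
  by_cases hu : u.val < 3
  · have hw : ¬ w.val < 3 := fun hw => h (propext (iff_of_true hu hw))
    simp [hu, hw]
  · have hw : w.val < 3 := by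
      by_contra hw; exact h (propext (iff_of_false hu hw))
    simp [hu, hw]

lemma walk_count {u v : Fin n} (p : (K31 n).Walk u v) :
    2 * ((p.support.countP (fun z => decide (z.val < 3)) : ℤ)
       - (p.support.countP (fun z => !decide (z.val < 3)) : ℤ)) = sgn u + sgn v := by
  induction p with
  | nil =>
    simp [sgn, List.countP_cons]
    split_ifs <;> omega
  | @cons u w v h q ih =>
    have huw : (u.val < 3) ≠ (w.val < 3) := h
    rw [support_cons, List.countP_cons, List.countP_cons]
    by_cases hu : u.val < 3 <;> by_cases hw : w.val < 3 <;>
      first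
      | exact absurd (propext (iff_of_true hu hw)) huw
      | exact absurd (propext (iff_of_false hu hw)) huw
      | (simp only [sgn] at ih ⊢
         simp [hu, hw] at ih ⊢
         push_cast at ih ⊢
         linarith)

lemma cycle_two_nbrs {V : Type*} {G : SimpleGraph V} {w : V} (c : G.Walk w w) (hc : c.IsCycle) :
    ∃ a b, a ≠ b ∧ s(w, a) ∈ c.edges ∧ s(w, b) ∈ c.edges := by
  cases c with
  | nil => exact absurd hc Walk.IsCycle.not_of_nil
  | @cons _ a _ h q =>
    obtain ⟨b, hb, r, hq⟩ := Walk.exists_eq_cons_of_ne h.ne q.reverse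
    have hbe : s(w, b) ∈ q.edges := by
      have : s(w, b) ∈ q.reverse.edges := by rw [hq]; simp
      simpa using this
    have hnodup : s(w, a) ∉ q.edges := by
      have := hc.isTrail.edges_nodup
      rw [Walk.edges_cons] at this
      exact (List.nodup_cons.mp this).1
    refine ⟨a, b, ?_, by simp, by simp [hbe]⟩
    rintro rfl
    exact hnodup hbe

theorem K31_no_dcc1 (n : ℕ) (hn : 3 ≤ n) : ¬ HasDCC1 (K31 n) := by
  rintro ⟨v, c, hc, e₁, e₂, hne, ⟨he₁, hce₁, hsup₁⟩, ⟨he₂, hce₂, hsup₂⟩, w, hw1, hw2⟩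
  obtain ⟨x, hx⟩ : ∃ x, s(w, x) = e₁ := ⟨Sym2.Mem.other hw1, Sym2.other_spec hw1⟩
  obtain ⟨y, hy⟩ : ∃ y, s(w, y) = e₂ := ⟨Sym2.Mem.other hw2, Sym2.other_spec hw2⟩
  have hadjx : (K31 n).Adj w x := by rw [← hx] at he₁; exact he₁
  have hadjy : (K31 n).Adj w y := by rw [← hy] at he₂; exact he₂
  have hxy : x ≠ y := by rintro rfl; exact hne (hx.symm.trans hy)
  have hws : w ∈ c.support := hsup₁ w hw1
  obtain ⟨a, b, hab, hea, heb⟩ := cycle_two_nbrs (c.rotate w hws) (hc.rotate hws)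
  have hEa : s(w, a) ∈ c.edges := ((c.rotate_edges w hws).mem_iff).mp hea
  have hEb : s(w, b) ∈ c.edges := ((c.rotate_edges w hws).mem_iff).mp heb
  have hadja : (K31 n).Adj w a := c.edges_subset_edgeSet hEa
  have hadjb : (K31 n).Adj w b := c.edges_subset_edgeSet hEb
  have hxa : x ≠ a := by rintro rfl; rw [hx] at hEa; exact hce₁ hEa
  have hxb : x ≠ b := by rintro rfl; rw [hx] at hEb; exact hce₁ hEb
  have hya : y ≠ a := by rintro rfl; rw [hy] at hEa; exact hce₂ hEa
  have hyb : y ≠ b := by rintro rfl; rw [hy] at hEb; exact hce₂ hEb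
  -- all four lie on the support tail
  have hnNil : ¬ c.Nil := hc.not_nil
  have htail : ∀ z : Fin n, z ∈ c.support → z ∈ c.support.tail := by
    intro z hz
    rcases (Walk.mem_support_iff c).mp hz with rfl | h
    · rw [← Walk.support_tail_of_not_nil c hnNil]; exact Walk.end_mem_support _
    · exact h
  have hxt : x ∈ c.support.tail := htail x (hsup₁ x (hx ▸ Sym2.mem_mk_right w x))
  have hyt : y ∈ c.support.tail := htail y (hsup₂ y (hy ▸ Sym2.mem_mk_right w y))
  have hat : a ∈ c.support.tail := htail a (c.snd_mem_support_of_mem_edges hEa)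
  have hbt : b ∈ c.support.tail := htail b (c.snd_mem_support_of_mem_edges hEb)
  have hnd : c.support.tail.Nodup := hc.support_nodup
  set t := c.support.tail with htdef
  -- the four distinct vertices give a lower bound on the count
  have hquad : ({x, y, a, b} : Finset (Fin n)).card = 4 := by
    rw [Finset.card_insert_of_notMem (by simp [hxy, hxa, hxb]),
      Finset.card_insert_of_notMem (by simp [hya, hyb]),
      Finset.card_insert_of_notMem (by simp [hab]), Finset.card_singleton]
  have key : ∀ p : Fin n → Bool, p x = true → p y = true → p a = true → p b = true →
      4 ≤ t.countP p := by
    intro p hpx hpy hpa hpb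
    rw [List.countP_eq_length_filter, ← List.toFinset_card_of_nodup (hnd.filter p)]
    calc 4 = ({x, y, a, b} : Finset (Fin n)).card := hquad.symm
    _ ≤ (t.filter p).toFinset.card := by
        apply Finset.card_le_card
        intro z hz
        rw [List.mem_toFinset, List.mem_filter]
        simp only [Finset.mem_insert, Finset.mem_singleton] at hz
        rcases hz with rfl | rfl | rfl | rfl <;>
          exact ⟨by assumption, by assumption⟩
  -- upper bound: at most 3 small vertices
  have hup : t.countP (fun z => decide (z.val < 3)) ≤ 3 := by
    rw [List.countP_eq_length_filter,
      ← List.toFinset_card_of_nodup (hnd.filter (fun z => decide (z.val < 3)))]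
    have : ((t.filter (fun z => decide (z.val < 3))).toFinset).card ≤
        (Finset.univ : Finset (Fin 3)).card := by
      apply Finset.card_le_card_of_injOn (fun z => (⟨min z.val 2, by omega⟩ : Fin 3))
        (fun _ _ => Finset.mem_univ _)
      intro z hz z' hz' hzz
      simp only [Finset.mem_coe, List.mem_toFinset, List.mem_filter] at hz hz'
      have h1 : z.val < 3 := by simpa using hz.2
      have h2 : z'.val < 3 := by simpa using hz'.2
      have := congrArg Fin.val hzz
      simp at this
      apply Fin.ext; omega
    simpa using this
  -- equality of counts from bipartiteness
  have hcount := walk_count c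
  have hsupp : c.support = v :: t := by
    rw [htdef, ← Walk.support_tail_of_not_nil c hnNil, Walk.cons_support_tail hnNil]
  rw [hsupp, List.countP_cons, List.countP_cons] at hcount
  have hST : (t.countP (fun z => decide (z.val < 3)) : ℤ)
      = t.countP (fun z => !decide (z.val < 3)) := by
    by_cases hv : v.val < 3 <;> simp [sgn, hv] at hcount <;> push_cast at hcount <;> linarith
  -- opposite sides
  have hside : ∀ z : Fin n, (K31 n).Adj w z → ((z.val < 3) ↔ ¬ (w.val < 3)) := by
    intro z hz
    have hz' : (w.val < 3) ≠ (z.val < 3) := hz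
    by_cases h1 : w.val < 3 <;> by_cases h2 : z.val < 3 <;> simp [h1, h2]
    · exact hz' (propext (iff_of_true h1 h2))
    · exact hz' (propext (iff_of_false h1 h2))
  by_cases hw3 : w.val < 3
  · have hx3 : ¬ x.val < 3 := fun h => ((hside x hadjx).mp h) hw3
    have hy3 : ¬ y.val < 3 := fun h => ((hside y hadjy).mp h) hw3
    have ha3 : ¬ a.val < 3 := fun h => ((hside a hadja).mp h) hw3
    have hb3 : ¬ b.val < 3 := fun h => ((hside b hadjb).mp h) hw3
    have h4 := key (fun z => !decide (z.val < 3))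
      (by simp [hx3]) (by simp [hy3]) (by simp [ha3]) (by simp [hb3])
    omega
  · have h4 := key (fun z => decide (z.val < 3))
      (by simp [(hside x hadjx).mpr hw3]) (by simp [(hside y hadjy).mpr hw3])
      (by simp [(hside a hadja).mpr hw3]) (by simp [(hside b hadjb).mpr hw3])
    omega
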